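/- In the dihedral Coxeter group I₂(m) (m ≥ 3), let Q₁ = s₁ s₂ s₁ s₂ … be the alternating word of length m+2, and let w₀ be the longest element. Then the subword complex Δ(Q₁; w₀) is the boundary complex of an (m+2)-gon: every singleton position is a vertex, and the facets are exactly the m+2 pairs of (cyclically) consecutive positions {k, k+1} for 1 ≤ k ≤ m+1 together with {1, m+2}. -/

import Mathlib

set_option maxHeartbeats 1000000


/-- The alternating word `i j i j ...` of length `n`. -/
def altWord {B : Type*} (i j : B) : ℕ → List B
  | 0 => []
  | n + 1 => i :: altWord j i n

@[simp] theorem altWord_length {B : Type*} (i j : B) (n : ℕ) :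
    (altWord i j n).length = n := by
  induction n generalizing i j with
  | zero => rfl
  | succ n ih => simp [altWord, ih]

/-- `L` contains a reduced expression of `π` as a (not necessarily contiguous) subword. -/
def containsRed {B W : Type*} [Group W] {M : CoxeterMatrix B} (cs : CoxeterSystem M W)
    (π : W) (L : List B) : Prop :=
  ∃ P : List B, P.Sublist L ∧ cs.IsReduced P ∧ cs.wordProd P = π

/-- The word obtained from `Q` by deleting the letters at the positions in `T`. -/
def cword {B : Type*} (Q : List B) (T : Finset (Fin Q.length)) : List B :=
  ((List.finRange Q.length).filter (fun p => p ∉ T)).map Q.get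

/-- The subword complex `Δ(Q; π)`. -/
def SWC {B W : Type*} [Group W] {M : CoxeterMatrix B} (cs : CoxeterSystem M W)
    (Q : List B) (π : W) : Set (Finset (Fin Q.length)) :=
  {T | containsRed cs π (cword Q T)}

/-- A facet: a maximal face. -/
def IsFacet {V : Type*} (X : Set (Finset V)) (T : Finset V) : Prop :=
  T ∈ X ∧ ∀ T' ∈ X, T ⊆ T' → T = T'

namespace SWCaux

/-- letter at position `k` of the alternating word `0 1 0 1 ...` -/
def f2 (k : ℕ) : Fin 2 := if k % 2 = 0 then 0 else 1

lemma f2_period {k l : ℕ} (h : k % 2 = l % 2) : f2 k = f2 l := by unfold f2; rw [h]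

lemma map_f2_range (c t : ℕ) :
    (List.range t).map (fun k => f2 (c + k)) = altWord (f2 c) (f2 (c + 1)) t := by
  induction t generalizing c with
  | zero => rfl
  | succ t ih =>
    rw [List.range_succ_eq_map, List.map_cons, List.map_map]
    have h1 : ((fun k => f2 (c + k)) ∘ Nat.succ) = fun k => f2 ((c+1) + k) := by
      funext k; simp only [Function.comp]; exact f2_period (by omega)
    rw [h1, ih (c+1)]
    show f2 c :: _ = f2 c :: altWord (f2 (c+1)) (f2 c) t
    have : f2 (c + 1 + 1) = f2 c := f2_period (by omega)
    rw [this]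

lemma altWord_f2 (n : ℕ) : altWord (0 : Fin 2) 1 n = (List.range n).map f2 := by
  have h := map_f2_range 0 n
  simp only [Nat.zero_add] at h
  rw [h]; rfl

lemma cword_eq_map {B : Type*} (Q : List B) (T : Finset (Fin Q.length)) (g : ℕ → Bool)
    (hg : ∀ p : Fin Q.length, (decide (p ∉ T)) = g p.val) (f : ℕ → B)
    (hf : ∀ p : Fin Q.length, Q.get p = f p.val) :
    cword Q T = ((List.range Q.length).filter g).map f := by
  unfold cword
  have h1 : (fun p : Fin Q.length => decide (p ∉ T)) = fun p => g p.val := funext hg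
  rw [h1, ← (show (List.finRange Q.length).map Fin.val = List.range Q.length from List.ext_getElem (by simp) (by simp)), List.filter_map, List.map_map]
  exact List.map_congr_left (fun p hp => hf p)

lemma cword_length {B : Type*} (Q : List B) (T : Finset (Fin Q.length)) :
    (cword Q T).length = Q.length - T.card := by
  unfold cword
  rw [List.length_map]
  have hperm := (List.filter_append_perm (fun p => decide (p ∈ T)) (List.finRange Q.length)).length_eq
  rw [List.length_append, List.length_finRange] at hperm
  have hcard : ((List.finRange Q.length).filter (fun p => decide (p ∈ T))).length = T.card := by
    rw [← List.toFinset_card_of_nodup (List.Nodup.filter _ (List.nodup_finRange _))]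
    congr 1
    ext p
    simp [List.mem_filter]
  have hpred : (fun p : Fin Q.length => decide (p ∉ T)) = fun p => !(decide (p ∈ T)) := by
    funext p; simp
  rw [hpred]
  omega

lemma swc_mono {B W : Type*} [Group W] {M : CoxeterMatrix B} (cs : CoxeterSystem M W)
    (Q : List B) (w : W) {T T' : Finset (Fin Q.length)} (hTT : T ⊆ T')
    (h : T' ∈ SWC cs Q w) : T ∈ SWC cs Q w := by
  obtain ⟨P, hP, hred, hprod⟩ := h
  refine ⟨P, hP.trans (List.Sublist.map _ (List.monotone_filter_right _ ?_)), hred, hprod⟩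
  intro p hp
  simp only [decide_eq_true_eq] at hp ⊢
  exact fun hmem => hp (hTT hmem)

lemma not_isReduced_ddup {B W : Type*} [Group W] {M : CoxeterMatrix B} (cs : CoxeterSystem M W)
    (A C : List B) (x : B) : ¬ cs.IsReduced (A ++ x :: x :: C) := by
  intro h
  have h1 : cs.wordProd (A ++ x :: x :: C) = cs.wordProd (A ++ C) := by
    simp [cs.wordProd_append, cs.wordProd_cons, ← mul_assoc, cs.simple_mul_simple_self]
  have h2 := cs.length_wordProd_le (A ++ C)
  unfold CoxeterSystem.IsReduced at h
  rw [h1] at h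
  simp [List.length_append] at h h2
  omega

lemma isReduced_tail {B W : Type*} [Group W] {M : CoxeterMatrix B} (cs : CoxeterSystem M W)
    (a : B) (t : List B) (h : cs.IsReduced (a :: t)) : cs.IsReduced t := by
  unfold CoxeterSystem.IsReduced at h ⊢
  rw [cs.wordProd_cons, List.length_cons] at h
  have h2 := cs.length_wordProd_le t
  have h3 := cs.length_mul_le (cs.simple a) (cs.wordProd t)
  rw [cs.length_simple] at h3
  omega

lemma chain_of_isReduced {B W : Type*} [Group W] {M : CoxeterMatrix B} (cs : CoxeterSystem M W) :
    ∀ (L : List B), cs.IsReduced L → List.Chain' (· ≠ ·) L := by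
  intro L
  induction L with
  | nil => intro _; exact List.isChain_nil
  | cons a t ih =>
    intro h
    match t, ih with
    | [], _ => exact List.isChain_singleton _
    | b :: t', ih =>
      simp only [List.Chain', List.isChain_cons_cons]
      refine ⟨fun hab => ?_, ih (isReduced_tail cs a _ h)⟩
      subst hab
      exact not_isReduced_ddup cs [] t' a h

lemma alt_of_chain : ∀ (L : List (Fin 2)) (a b : Fin 2), a ≠ b →
    List.Chain' (· ≠ ·) (a :: L) → a :: L = altWord a b (L.length + 1) := by
  intro L
  induction L with
  | nil => intro a b _ _; rfl
  | cons c t ih =>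
    intro a b hab hchain
    simp only [List.Chain', List.isChain_cons_cons] at hchain
    have hac : a ≠ c := hchain.1
    have hcb : b = c := by
      apply Fin.ext
      have h1 : a.val ≠ b.val := fun h => hab (Fin.ext h)
      have h2 : a.val ≠ c.val := fun h => hac (Fin.ext h)
      have := a.isLt; have := b.isLt; have := c.isLt
      omega
    subst hcb
    show a :: b :: t = a :: altWord b a (t.length + 1)
    rw [← ih b a (Ne.symm hab) hchain.2]

lemma altWord_eq_alternatingWord {B : Type*} (i j : B) (n : ℕ) :
    altWord i j n = if Even n then CoxeterSystem.alternatingWord i j n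
      else CoxeterSystem.alternatingWord j i n := by
  induction n generalizing i j with
  | zero => simp [altWord, CoxeterSystem.alternatingWord]
  | succ n ih =>
    show i :: altWord j i n = _
    rw [ih j i]
    by_cases h : Even n
    · have h' : ¬ Even (n + 1) := by simp [Nat.even_add_one, h]
      rw [if_pos h, if_neg h', CoxeterSystem.alternatingWord_succ' j i n, if_pos h]
    · have h' : Even (n + 1) := by simpa [Nat.even_add_one] using h
      rw [if_neg h, if_pos h', CoxeterSystem.alternatingWord_succ' i j n, if_neg h]

/-- The two alternating words of length `m` are both reduced words for `w₀`. -/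
lemma both_reduced {W : Type*} [Group W] (m : ℕ) (hm : 3 ≤ m)
    (M : CoxeterMatrix (Fin 2)) (hM : M 0 1 = m) (cs : CoxeterSystem M W)
    (w₀ : W) (hlen : cs.length w₀ = m) :
    (cs.IsReduced (altWord (0 : Fin 2) 1 m) ∧ cs.wordProd (altWord (0 : Fin 2) 1 m) = w₀) ∧
    (cs.IsReduced (altWord (1 : Fin 2) 0 m) ∧ cs.wordProd (altWord (1 : Fin 2) 0 m) = w₀) := by
  have hbraid : cs.wordProd (altWord (0 : Fin 2) 1 m) = cs.wordProd (altWord (1 : Fin 2) 0 m) := by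
    have h := cs.wordProd_braidWord_eq 0 1
    unfold CoxeterSystem.braidWord at h
    rw [M.symmetric 1 0] at h
    rw [hM] at h
    rw [altWord_eq_alternatingWord, altWord_eq_alternatingWord]
    by_cases he : Even m
    · rw [if_pos he, if_pos he]; exact h
    · rw [if_neg he, if_neg he]; exact h.symm
  obtain ⟨ω, hωlen, hωprod⟩ := cs.exists_reduced_word w₀
  replace hωlen : ω.length = m := by rw [← hlen, hωprod]; exact hωlen.symm
  have hωred : cs.IsReduced ω := by
    unfold CoxeterSystem.IsReduced
    rw [← hωprod, hωlen, hlen]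
  have hchain := chain_of_isReduced cs ω hωred
  match ω, hωlen, hωprod, hchain with
  | [], hωlen, _, _ => simp at hωlen; omega
  | [a], hωlen, _, _ => simp at hωlen; omega
  | a :: c :: t, hωlen, hωprod, hchain =>
    have hac : a ≠ c := (List.isChain_cons_cons.mp hchain).1
    have halt : a :: (c :: t) = altWord a c ((c :: t).length + 1) :=
      alt_of_chain (c :: t) a c hac hchain
    have hlen2 : (c :: t).length + 1 = m := by simpa using hωlen
    rw [hlen2] at halt
    have hcases : (a = 0 ∧ c = 1) ∨ (a = 1 ∧ c = 0) := by
      have h1 : a.val ≠ c.val := fun h => hac (Fin.ext h)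
      have ha2 := a.isLt; have hc2 := c.isLt
      have : (a.val = 0 ∧ c.val = 1) ∨ (a.val = 1 ∧ c.val = 0) := by omega
      rcases this with ⟨h2, h3⟩ | ⟨h2, h3⟩
      · left; exact ⟨Fin.ext h2, Fin.ext h3⟩
      · right; exact ⟨Fin.ext h2, Fin.ext h3⟩
    have hprod01 : cs.wordProd (altWord (0 : Fin 2) 1 m) = w₀ := by
      rcases hcases with ⟨rfl, rfl⟩ | ⟨rfl, rfl⟩
      · rw [hωprod, ← halt]
      · rw [hbraid, hωprod, ← halt]
    have hprod10 : cs.wordProd (altWord (1 : Fin 2) 0 m) = w₀ := by rw [← hbraid]; exact hprod01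
    refine ⟨⟨?_, hprod01⟩, ⟨?_, hprod10⟩⟩
    · unfold CoxeterSystem.IsReduced; rw [hprod01, hlen, altWord_length]
    · unfold CoxeterSystem.IsReduced; rw [hprod10, hlen, altWord_length]

lemma filter_range_pair (a b n u v : ℕ) (hu : b = a + 1 + u) (hv : n = b + 1 + v) :
    (List.range n).filter (fun k => decide (k ≠ a ∧ k ≠ b)) =
      List.range a ++ (List.range u).map (fun x => a + 1 + x)
        ++ (List.range v).map (fun x => b + 1 + x) := by
  subst hv
  rw [List.range_add, List.filter_append]
  have e1 : List.range (b + 1) = List.range b ++ [b] := List.range_succ (n := b)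
  rw [e1, List.filter_append]
  subst hu
  rw [List.range_add, List.filter_append]
  have e2 : List.range (a + 1) = List.range a ++ [a] := List.range_succ (n := a)
  rw [e2, List.filter_append]
  have p1 : (List.range a).filter (fun k => decide (k ≠ a ∧ k ≠ (a+1+u))) = List.range a := by
    rw [List.filter_eq_self]
    intro k hk
    rw [List.mem_range] at hk
    simp only [decide_eq_true_eq]
    omega
  have p2 : [a].filter (fun k => decide (k ≠ a ∧ k ≠ (a+1+u))) = [] := by simp
  have p3 : ((List.range u).map (fun x => a + 1 + x)).filter
      (fun k => decide (k ≠ a ∧ k ≠ (a+1+u))) = (List.range u).map (fun x => a + 1 + x) := by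
    rw [List.filter_map, List.filter_eq_self.mpr]
    intro k hk
    rw [List.mem_range] at hk
    simp only [Function.comp, decide_eq_true_eq]
    omega
  have p4 : [a+1+u].filter (fun k => decide (k ≠ a ∧ k ≠ (a+1+u))) = [] := by simp
  have p5 : ((List.range v).map (fun x => a + 1 + u + 1 + x)).filter
      (fun k => decide (k ≠ a ∧ k ≠ (a+1+u))) = (List.range v).map (fun x => a + 1 + u + 1 + x) := by
    rw [List.filter_map, List.filter_eq_self.mpr]
    intro k hk
    rw [List.mem_range] at hk
    simp only [Function.comp, decide_eq_true_eq]
    omega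
  rw [p1, p2, p3, p4, p5]
  simp

lemma exists_ddup (a b v : ℕ) (hab : a + 1 < b) (h : 0 < a ∨ 0 < v) :
    ∃ A C x, (List.range a ++ (List.range (b - a - 1)).map (fun x => a + 1 + x)
      ++ (List.range v).map (fun x => b + 1 + x)).map f2 = A ++ x :: x :: C := by
  by_cases ha : 0 < a
  · refine ⟨(List.range (a-1)).map f2,
      ((List.range (b-a-2)).map (fun y => f2 (a + 1 + (y + 1))))
        ++ (List.range v).map (fun y => f2 (b + 1 + y)), f2 (a-1), ?_⟩
    have e1 : List.range a = List.range (a-1) ++ [a-1] := by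
      conv_lhs => rw [show a = (a-1)+1 by omega]
      rw [List.range_succ]
    have e2 : List.range (b - a - 1) = 0 :: (List.range (b - a - 2)).map Nat.succ := by
      conv_lhs => rw [show b - a - 1 = (b-a-2)+1 by omega]
      rw [List.range_succ_eq_map]
    rw [e1, e2]
    simp only [List.map_append, List.map_cons, List.map_map, List.cons_append,
      List.append_assoc, List.nil_append, List.singleton_append, Nat.add_zero,
      Function.comp]
    rw [show f2 (a + 1) = f2 (a - 1) from f2_period (by omega)]
    rfl
  · have ha0 : a = 0 := by omega
    have hv : 0 < v := by tauto
    subst ha0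
    refine ⟨(List.range (b-2)).map (fun y => f2 (0 + 1 + y)),
      (List.range (v-1)).map (fun y => f2 (b + 1 + (y + 1))), f2 (0 + 1 + (b-2)), ?_⟩
    have e1 : List.range (b - 0 - 1) = List.range (b-2) ++ [b-2] := by
      conv_lhs => rw [show b - 0 - 1 = (b-2)+1 by omega]
      rw [List.range_succ]
    have e2 : List.range v = 0 :: (List.range (v-1)).map Nat.succ := by
      conv_lhs => rw [show v = (v-1)+1 by omega]
      rw [List.range_succ_eq_map]
    rw [e1, e2]
    simp only [List.map_append, List.map_cons, List.map_map, List.cons_append,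
      List.append_assoc, List.nil_append, List.singleton_append, Nat.add_zero,
      List.range_zero, List.map_nil, Function.comp]
    rw [show f2 (b + 1) = f2 (0 + 1 + (b-2)) from f2_period (by omega)]
    rfl

end SWCaux

/-- in the dihedral group `I₂(m)` (`m ≥ 3`), for the alternating word
`Q₁ = s₁ s₂ s₁ s₂ ⋯` of length `m + 2` and the longest element `w₀`, the subword complex
`Δ(Q₁; w₀)` is the boundary complex of an `(m+2)`-gon: every position is a vertex, and
the facets are exactly the pairs of consecutive positions `{k, k+1}` together with the
pair of the first and last positions. (Positions are 0-indexed below.) -/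
theorem swc_dihedral_alternating_is_polygon {W : Type*} [Group W] (m : ℕ) (hm : 3 ≤ m)
    (M : CoxeterMatrix (Fin 2)) (hM : M 0 1 = m) (cs : CoxeterSystem M W)
    (w₀ : W) (hlen : cs.length w₀ = m) (hlong : ∀ w : W, cs.length w ≤ m) :
    (∀ v : Fin ((altWord (0 : Fin 2) 1 (m + 2)).length),
        ({v} : Finset _) ∈ SWC cs (altWord (0 : Fin 2) 1 (m + 2)) w₀) ∧
      (∀ T : Finset (Fin ((altWord (0 : Fin 2) 1 (m + 2)).length)),
        IsFacet (SWC cs (altWord (0 : Fin 2) 1 (m + 2)) w₀) T ↔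
          ((∃ k : ℕ, ∃ h : k + 1 < (altWord (0 : Fin 2) 1 (m + 2)).length,
              T = {⟨k, by omega⟩, ⟨k + 1, h⟩}) ∨
            T = {⟨0, by simp⟩, ⟨m + 1, by simp⟩})) := by
  classical
  have hQlen : (altWord (0 : Fin 2) 1 (m + 2)).length = m + 2 := altWord_length _ _ _
  have hQm : (altWord (0 : Fin 2) 1 (m + 2)) = (List.range (m+2)).map SWCaux.f2 :=
    SWCaux.altWord_f2 (m+2)
  have hget : ∀ p : Fin (altWord (0 : Fin 2) 1 (m + 2)).length, (altWord (0 : Fin 2) 1 (m + 2)).get p = SWCaux.f2 p.val := by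
    intro p
    rw [List.get_eq_getElem, List.getElem_of_eq hQm]
    rw [List.getElem_map, List.getElem_range]
  have hboth := SWCaux.both_reduced m hm M hM cs w₀ hlen
  have hcw : ∀ (a b : Fin (altWord (0 : Fin 2) 1 (m + 2)).length), a.val < b.val →
      cword (altWord (0 : Fin 2) 1 (m + 2)) {a, b} = (List.range a.val
        ++ (List.range (b.val - a.val - 1)).map (fun x => a.val + 1 + x)
        ++ (List.range (m + 2 - b.val - 1)).map (fun x => b.val + 1 + x)).map SWCaux.f2 := by
    intro a b hab
    have hbm : b.val < m + 2 := by have := b.isLt; omega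
    rw [SWCaux.cword_eq_map (altWord (0 : Fin 2) 1 (m + 2)) {a, b} (fun k => decide (k ≠ a.val ∧ k ≠ b.val)) ?_ SWCaux.f2 hget]
    · rw [show List.range (altWord (0 : Fin 2) 1 (m + 2)).length = List.range (m + 2) from by rw [hQlen],
        SWCaux.filter_range_pair a.val b.val (m+2) (b.val - a.val - 1)
        (m + 2 - b.val - 1) (by omega) (by omega)]
    · intro p
      rw [decide_eq_decide]
      simp only [Finset.mem_insert, Finset.mem_singleton, Fin.ext_iff]
      tauto
  -- the consecutive pairs are faces
  have hpair1 : ∀ (k : ℕ) (hk : k + 1 < m + 2),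
      ({⟨k, by omega⟩, ⟨k + 1, by omega⟩} : Finset (Fin (altWord (0 : Fin 2) 1 (m + 2)).length)) ∈ SWC cs (altWord (0 : Fin 2) 1 (m + 2)) w₀ := by
    intro k hk
    have hcweq : cword (altWord (0 : Fin 2) 1 (m + 2)) {⟨k, by omega⟩, ⟨k + 1, by omega⟩} = (List.range m).map SWCaux.f2 := by
      rw [hcw ⟨k, by omega⟩ ⟨k+1, by omega⟩ (by simp)]
      simp only [show k + 1 - k - 1 = 0 from by omega, List.range_zero, List.map_nil,
        List.append_nil, show m + 2 - (k+1) - 1 = m - k from by omega]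
      conv_rhs => rw [show m = k + (m - k) from by omega, List.range_add]
      rw [List.map_append, List.map_append, List.map_map, List.map_map]
      congr 1
      apply List.map_congr_left
      intro x hx
      show SWCaux.f2 (k + 1 + 1 + x) = SWCaux.f2 (k + x)
      exact SWCaux.f2_period (by omega)
    refine ⟨(List.range m).map SWCaux.f2, ?_, ?_, ?_⟩
    · rw [hcweq]
    · rw [← SWCaux.altWord_f2]; exact hboth.1.1
    · rw [← SWCaux.altWord_f2]; exact hboth.1.2
  -- the pair of endpoints is a face
  have hpair2 : ({⟨0, by omega⟩, ⟨m + 1, by omega⟩} : Finset (Fin (altWord (0 : Fin 2) 1 (m + 2)).length)) ∈ SWC cs (altWord (0 : Fin 2) 1 (m + 2)) w₀ := by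
    have hcweq : cword (altWord (0 : Fin 2) 1 (m + 2)) {⟨0, by omega⟩, ⟨m + 1, by omega⟩} = altWord (1 : Fin 2) 0 m := by
      rw [hcw ⟨0, by omega⟩ ⟨m+1, by omega⟩ (by simp)]
      simp only [show (m+1) - 0 - 1 = m from by omega, show m + 2 - (m+1) - 1 = 0 from by omega,
        List.range_zero, List.map_nil, List.append_nil, List.nil_append]
      rw [List.map_map]
      have h := SWCaux.map_f2_range 1 m
      have e : (SWCaux.f2 ∘ fun x => 0 + 1 + x) = fun k => SWCaux.f2 (1 + k) := by
        funext k; simp only [Function.comp, Nat.zero_add]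
      rw [e, h]
      rfl
    refine ⟨altWord (1 : Fin 2) 0 m, ?_, hboth.2.1, hboth.2.2⟩
    rw [hcweq]
  -- faces have at most 2 elements
  have hcardle : ∀ T' ∈ SWC cs (altWord (0 : Fin 2) 1 (m + 2)) w₀, T'.card ≤ 2 := by
    rintro T' ⟨P, hsub, hred, hprod⟩
    have h1 : P.length = m := by
      unfold CoxeterSystem.IsReduced at hred
      rw [hprod, hlen] at hred
      omega
    have h2 := hsub.length_le
    rw [SWCaux.cword_length] at h2
    omega
  constructor
  · -- vertices
    intro v
    by_cases hv : v.val + 1 < m + 2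
    · refine SWCaux.swc_mono cs (altWord (0 : Fin 2) 1 (m + 2)) w₀ ?_ (hpair1 v.val hv)
      exact Finset.singleton_subset_iff.mpr (Finset.mem_insert_self _ _)
    · have hveq : v = ⟨m+1, by omega⟩ :=
        Fin.ext (show v.val = m + 1 by have := v.isLt; omega)
      refine SWCaux.swc_mono cs (altWord (0 : Fin 2) 1 (m + 2)) w₀ ?_ (hpair1 m (by omega))
      rw [hveq]
      exact Finset.singleton_subset_iff.mpr
        (Finset.mem_insert_of_mem (Finset.mem_singleton_self _))
  · -- facets
    intro T
    constructor
    · rintro ⟨hmem, hmax⟩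
      have hc2 : T.card = 2 := by
        have hle := hcardle T hmem
        rcases Nat.lt_or_ge T.card 2 with hlt | hge
        · exfalso
          by_cases h0 : T = ∅
          · have heq := hmax {⟨0, by omega⟩, ⟨1, by omega⟩} (hpair1 0 (by omega))
              (by rw [h0]; exact Finset.empty_subset _)
            rw [h0] at heq
            exact (Finset.insert_ne_empty _ _) heq.symm
          · have hc1 : T.card = 1 := by
              have h1 : T.card ≠ 0 := fun h => h0 (Finset.card_eq_zero.mp h)
              omega
            obtain ⟨v, hv⟩ := Finset.card_eq_one.mp hc1
            by_cases hv1 : v.val + 1 < m + 2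
            · have heq := hmax {⟨v.val, by omega⟩, ⟨v.val + 1, by omega⟩} (hpair1 v.val hv1)
                (by rw [hv]; exact Finset.singleton_subset_iff.mpr (Finset.mem_insert_self _ _))
              rw [heq, Finset.card_pair (by simp [Fin.ext_iff]; try omega)] at hlt
              omega
            · have hveq : v = ⟨m+1, by omega⟩ :=
                Fin.ext (show v.val = m + 1 by have := v.isLt; omega)
              have heq := hmax {⟨m, by omega⟩, ⟨m + 1, by omega⟩} (hpair1 m (by omega))
                (by rw [hv, hveq]
                    exact Finset.singleton_subset_iff.mpr
                      (Finset.mem_insert_of_mem (Finset.mem_singleton_self _)))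
              rw [heq, Finset.card_pair (by simp [Fin.ext_iff]; try omega)] at hlt
              omega
        · omega
      obtain ⟨x, y, hxy, hTxy⟩ := Finset.card_eq_two.mp hc2
      obtain ⟨a, b, hab, hTab⟩ : ∃ a b : Fin (altWord (0 : Fin 2) 1 (m + 2)).length, a.val < b.val ∧ T = {a, b} := by
        have hne : x.val ≠ y.val := fun h => hxy (Fin.ext h)
        rcases Nat.lt_or_ge x.val y.val with h | h
        · exact ⟨x, y, h, hTxy⟩
        · exact ⟨y, x, by omega, by rw [hTxy, Finset.pair_comm]⟩
      obtain ⟨P, hsub, hred, hprod⟩ := hmem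
      have hPlen : P.length = m := by
        unfold CoxeterSystem.IsReduced at hred
        rw [hprod, hlen] at hred
        omega
      have hclen : (cword (altWord (0 : Fin 2) 1 (m + 2)) T).length = m := by
        rw [SWCaux.cword_length, hc2]
        omega
      have hPeq : P = cword (altWord (0 : Fin 2) 1 (m + 2)) T := hsub.eq_of_length (by omega)
      rw [hPeq, hTab] at hred
      have hbv : b.val < m + 2 := by have := b.isLt; omega
      by_cases hb1 : b.val = a.val + 1
      · left
        refine ⟨a.val, by omega, hTab.trans ?_⟩
        ext p
        simp only [Finset.mem_insert, Finset.mem_singleton, Fin.ext_iff]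
        omega
      · by_cases hb2 : a.val = 0 ∧ b.val = m + 1
        · right
          refine hTab.trans ?_
          ext p
          simp only [Finset.mem_insert, Finset.mem_singleton, Fin.ext_iff]
          omega
        · exfalso
          rw [hcw a b hab] at hred
          obtain ⟨A, C, z, hACz⟩ := SWCaux.exists_ddup a.val b.val (m + 2 - b.val - 1)
            (by omega) (by omega)
          rw [hACz] at hred
          exact SWCaux.not_isReduced_ddup cs A C z hred
    · rintro (⟨k, hk, rfl⟩ | rfl)
      · have hk' : k + 1 < m + 2 := by omega
        refine ⟨hpair1 k hk', ?_⟩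
        intro T' hT' hsub
        refine Finset.eq_of_subset_of_card_le hsub ?_
        rw [Finset.card_pair (by simp [Fin.ext_iff]; try omega)]
        exact hcardle T' hT'
      · refine ⟨hpair2, ?_⟩
        intro T' hT' hsub
        refine Finset.eq_of_subset_of_card_le hsub ?_
        rw [Finset.card_pair (by simp [Fin.ext_iff]; try omega)]
        exact hcardle T' hT'
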